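/- Let f : ℝ → ℝ be a bounded Lipschitz function with constant L, let F satisfy F(y) − F(x) = ∫_x^y f(s) ds for all x ≤ y, let (b_n) be positive reals with b_n → 0, let (F_n) be functions ℝ → ℝ, and set Δ_n(b) = sup{ √n·|(F_n − F)(u) − (F_n − F)(v)| : |u − v| ≤ b }. If Δ_n(b_n)/√(b_n·log n) is bounded, Δ_n(b_n)/(b_n·(log n)^{1/2}·log log n) → 0, and n·b_n/log n → ∞, then ‖B_{b_n} F_n − f‖_∞ → 0 as n → ∞. -/

import Mathlib

open Filter MeasureTheory ProbabilityTheory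

/-- The binning (histogram) operator: `A_b F (x) = (F((k+1)b) - F(kb))/b` for
`x ∈ [kb, (k+1)b)`, where `k = ⌊x/b⌋`. -/
noncomputable def abin (b : ℝ) (F : ℝ → ℝ) (x : ℝ) : ℝ :=
  (F (((⌊x / b⌋ : ℝ) + 1) * b) - F ((⌊x / b⌋ : ℝ) * b)) / b

/-- The interpolation weight `u_b(x) = x/b - (⌊x/b - 1/2⌋ + ⌊x/b + 1/2⌋)/2`. -/
noncomputable def ub (b x : ℝ) : ℝ :=
  x / b - ((⌊x / b - 1 / 2⌋ : ℝ) + (⌊x / b + 1 / 2⌋ : ℝ)) / 2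

/-- The frequency polygon operator
`B_b F (x) = (1 - u_b(x)) A_b F (x - b/2) + u_b(x) A_b F (x + b/2)`. -/
noncomputable def bfp (b : ℝ) (F : ℝ → ℝ) (x : ℝ) : ℝ :=
  (1 - ub b x) * abin b F (x - b / 2) + ub b x * abin b F (x + b / 2)
lemma ub_mem (b x : ℝ) : 0 ≤ ub b x ∧ ub b x ≤ 1 := by
  unfold ub
  have h : ⌊x / b + 1 / 2⌋ = ⌊x / b - 1 / 2⌋ + 1 := by
    rw [show x / b + 1/2 = (x / b - 1/2) + 1 by ring, Int.floor_add_one]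
  rw [h]
  push_cast
  have h1 := Int.floor_le (x / b - 1/2)
  have h2 := Int.lt_floor_add_one (x / b - 1/2)
  constructor <;> linarith

lemma abin_bias (L : ℝ) (hL : 0 ≤ L) (f F : ℝ → ℝ)
    (hfc : Continuous f)
    (hf : ∀ x y : ℝ, |f x - f y| ≤ L * |x - y|)
    (hF : ∀ x y : ℝ, x ≤ y → F y - F x = ∫ s in x..y, f s)
    (b : ℝ) (hb : 0 < b) (x y : ℝ) (hxy : |x - y| ≤ b) :
    |abin b F x - f y| ≤ 2 * L * b := by
  set k : ℤ := ⌊x / b⌋ with hk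
  set a : ℝ := (k : ℝ) * b with ha
  set c : ℝ := ((k : ℝ) + 1) * b with hc
  have hax : a ≤ x := by
    have h := Int.floor_le (x / b)
    rw [ha]
    calc (k:ℝ) * b ≤ (x / b) * b := by nlinarith
    _ = x := by field_simp
  have hxc : x < c := by
    have h := Int.lt_floor_add_one (x / b)
    rw [hc]
    calc x = (x / b) * b := by field_simp
    _ < ((k:ℝ) + 1) * b := by nlinarith
  have hac : a ≤ c := le_of_lt (lt_of_le_of_lt hax hxc)
  have hca : c - a = b := by rw [ha, hc]; ring
  have hint : IntervalIntegrable f volume a c := hfc.intervalIntegrable a c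
  have key : abin b F x - f y = (∫ s in a..c, (f s - f y)) / b := by
    rw [intervalIntegral.integral_sub hint (intervalIntegrable_const),
      intervalIntegral.integral_const, ← hF a c hac]
    unfold abin
    rw [← hk, ← ha, ← hc, hca]
    field_simp
    rw [smul_eq_mul]
  have hbound : ‖∫ s in a..c, (f s - f y)‖ ≤ (L * (2*b)) * |c - a| := by
    apply intervalIntegral.norm_integral_le_of_norm_le_const
    intro s hs
    rw [Set.uIoc_of_le hac] at hs
    have hs1 : |s - x| ≤ b := by
      rw [abs_le]; constructor <;> [linarith [hs.1, hxc, hca]; linarith [hs.2, hax, hca]]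
    have hs2 : |s - y| ≤ 2 * b := by
      calc |s - y| ≤ |s - x| + |x - y| := abs_sub_le s x y
      _ ≤ 2 * b := by linarith
    calc ‖f s - f y‖ = |f s - f y| := rfl
    _ ≤ L * |s - y| := hf s y
    _ ≤ L * (2 * b) := by nlinarith
  rw [key, abs_div, abs_of_pos hb, div_le_iff₀ hb]
  calc |∫ s in a..c, (f s - f y)| ≤ (L * (2*b)) * |c - a| := hbound
  _ = 2 * L * b * b := by rw [hca, abs_of_pos hb]; ring

lemma abin_stoch (b : ℝ) (hb : 0 < b) (sn : ℝ) (hsn : 0 < sn) (F G : ℝ → ℝ) (D : ℝ)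
    (hD : ∀ u v : ℝ, |u - v| ≤ b → sn * |(G u - F u) - (G v - F v)| ≤ D)
    (x : ℝ) : |abin b G x - abin b F x| ≤ D / (sn * b) := by
  set k : ℤ := ⌊x / b⌋
  have h : abin b G x - abin b F x
      = ((G (((k:ℝ)+1)*b) - F (((k:ℝ)+1)*b)) - (G ((k:ℝ)*b) - F ((k:ℝ)*b))) / b := by
    unfold abin; ring
  have hd : |((k:ℝ)+1)*b - (k:ℝ)*b| ≤ b := by
    rw [show ((k:ℝ)+1)*b - (k:ℝ)*b = b by ring, abs_of_pos hb]
  have h2 := hD (((k:ℝ)+1)*b) ((k:ℝ)*b) hd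
  rw [h, abs_div, abs_of_pos hb, div_le_div_iff₀ hb (by positivity)]
  calc |(G (((k:ℝ)+1)*b) - F (((k:ℝ)+1)*b)) - (G ((k:ℝ)*b) - F ((k:ℝ)*b))| * (sn * b)
      = (sn * |(G (((k:ℝ)+1)*b) - F (((k:ℝ)+1)*b)) - (G ((k:ℝ)*b) - F ((k:ℝ)*b))|) * b := by ring
  _ ≤ D * b := by nlinarith

lemma bfp_bound (L : ℝ) (hL : 0 ≤ L) (f F G : ℝ → ℝ) (hfc : Continuous f)
    (hf : ∀ x y : ℝ, |f x - f y| ≤ L * |x - y|)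
    (hF : ∀ x y : ℝ, x ≤ y → F y - F x = ∫ s in x..y, f s)
    (b : ℝ) (hb : 0 < b) (sn : ℝ) (hsn : 0 < sn) (D : ℝ)
    (hD : ∀ u v : ℝ, |u - v| ≤ b → sn * |(G u - F u) - (G v - F v)| ≤ D) (x : ℝ) :
    |bfp b G x - f x| ≤ 2 * L * b + D / (sn * b) := by
  obtain ⟨hu0, hu1⟩ := ub_mem b x
  have hb2 : |x - b/2 - x| ≤ b := by
    rw [show x - b/2 - x = -(b/2) by ring, abs_neg, abs_of_pos (by linarith)]; linarith
  have hb2' : |x + b/2 - x| ≤ b := by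
    rw [show x + b/2 - x = b/2 by ring, abs_of_pos (by linarith)]; linarith
  have h1 := abin_bias L hL f F hfc hf hF b hb (x - b/2) x hb2
  have h2 := abin_bias L hL f F hfc hf hF b hb (x + b/2) x hb2'
  have h3 := abin_stoch b hb sn hsn F G D hD (x - b/2)
  have h4 := abin_stoch b hb sn hsn F G D hD (x + b/2)
  have key : bfp b G x - f x =
      (1 - ub b x) * ((abin b G (x-b/2) - abin b F (x-b/2)) + (abin b F (x-b/2) - f x))
      + ub b x * ((abin b G (x+b/2) - abin b F (x+b/2)) + (abin b F (x+b/2) - f x)) := by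
    unfold bfp; ring
  rw [key]
  have e1 := abs_add_le (abin b G (x-b/2) - abin b F (x-b/2)) (abin b F (x-b/2) - f x)
  have e2 := abs_add_le (abin b G (x+b/2) - abin b F (x+b/2)) (abin b F (x+b/2) - f x)
  have e0 := abs_add_le ((1 - ub b x) * ((abin b G (x-b/2) - abin b F (x-b/2)) + (abin b F (x-b/2) - f x)))
      (ub b x * ((abin b G (x+b/2) - abin b F (x+b/2)) + (abin b F (x+b/2) - f x)))
  rw [abs_mul, abs_mul, abs_of_nonneg (by linarith : (0:ℝ) ≤ 1 - ub b x), abs_of_nonneg hu0] at e0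
  refine e0.trans ?_
  nlinarith [abs_nonneg ((abin b G (x-b/2) - abin b F (x-b/2)) + (abin b F (x-b/2) - f x)),
    abs_nonneg ((abin b G (x+b/2) - abin b F (x+b/2)) + (abin b F (x+b/2) - f x))]


/-- Uniform consistency of the frequency polygon: if the modulus of continuity
`Δ_n(b_n)` of `√n (F_n - F)` satisfies `Δ_n(b_n) = O(√(b_n log n))` and
`Δ_n(b_n) = o(b_n (log n)^{1/2} log log n)`, with `b_n → 0` and `n b_n / log n → ∞`,
then `‖B_{b_n} F_n - f‖_∞ → 0`. -/
theorem bfp_uniform_consistency (L : ℝ) (hL : 0 ≤ L) (f F : ℝ → ℝ)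
    (hfb : ∃ M : ℝ, ∀ x : ℝ, |f x| ≤ M)
    (hf : ∀ x y : ℝ, |f x - f y| ≤ L * |x - y|)
    (hF : ∀ x y : ℝ, x ≤ y → F y - F x = ∫ s in x..y, f s)
    (bn : ℕ → ℝ) (hbn : ∀ n, 0 < bn n)
    (hbn0 : Tendsto bn atTop (nhds 0))
    (Fn : ℕ → ℝ → ℝ) (Δ : ℕ → ℝ)
    (hΔ : ∀ n : ℕ, ∀ u v : ℝ, |u - v| ≤ bn n →
      Real.sqrt n * |(Fn n u - F u) - (Fn n v - F v)| ≤ Δ n)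
    (hΔO : ∃ C : ℝ, ∀ n : ℕ, Δ n / Real.sqrt (bn n * Real.log n) ≤ C)
    (hΔo : Tendsto
      (fun n : ℕ => Δ n / (bn n * (Real.log n) ^ ((1 : ℝ) / 2) * Real.log (Real.log n)))
      atTop (nhds 0))
    (hnb : Tendsto (fun n : ℕ => n * bn n / Real.log n) atTop atTop) :
    TendstoUniformly (fun n : ℕ => bfp (bn n) (Fn n)) f atTop := by
  have hfc : Continuous f := by
    have : LipschitzWith (Real.toNNReal L) f :=
      LipschitzWith.of_dist_le_mul (fun x y => by
        simpa [Real.dist_eq, Real.coe_toNNReal L hL] using hf x y)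
    exact this.continuous
  obtain ⟨C, hC⟩ := hΔO
  have hΔnn : ∀ n, 0 ≤ Δ n := by
    intro n
    have := hΔ n 0 0 (by simp [(hbn n).le])
    simpa using this
  -- the stochastic term tends to 0
  set ε : ℕ → ℝ := fun n => 2 * L * bn n + Δ n / (Real.sqrt n * bn n) with hε
  have hub : ∀ᶠ n in atTop,
      Δ n / (Real.sqrt n * bn n) ≤ C * Real.sqrt ((↑n * bn n / Real.log n)⁻¹) := by
    filter_upwards [eventually_ge_atTop 2] with n hn
    have hn1 : (1:ℝ) < n := by exact_mod_cast Nat.lt_of_lt_of_le Nat.one_lt_two hn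
    have hlog : 0 < Real.log n := Real.log_pos hn1
    have hbp := hbn n
    have hs : 0 < Real.sqrt (bn n * Real.log n) := Real.sqrt_pos.2 (by positivity)
    have hΔle : Δ n ≤ C * Real.sqrt (bn n * Real.log n) := (div_le_iff₀ hs).1 (hC n)
    have hsnp : 0 < Real.sqrt n := Real.sqrt_pos.2 (by positivity)
    have heq : Real.sqrt (bn n * Real.log n) / (Real.sqrt n * bn n)
        = Real.sqrt ((↑n * bn n / Real.log n)⁻¹) := by
      rw [inv_div, Real.sqrt_div hlog.le, Real.sqrt_mul (by positivity : (0:ℝ) ≤ (n:ℝ)),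
        Real.sqrt_mul hbp.le]
      have hbs : Real.sqrt (bn n) * Real.sqrt (bn n) = bn n := Real.mul_self_sqrt hbp.le
      have hbsp : 0 < Real.sqrt (bn n) := Real.sqrt_pos.2 hbp
      field_simp
      linear_combination hbs
    calc Δ n / (Real.sqrt n * bn n)
        ≤ (C * Real.sqrt (bn n * Real.log n)) / (Real.sqrt n * bn n) := by gcongr
    _ = C * (Real.sqrt (bn n * Real.log n) / (Real.sqrt n * bn n)) := by ring
    _ = _ := by rw [heq]
  have ht2 : Tendsto (fun n : ℕ => Δ n / (Real.sqrt n * bn n)) atTop (nhds 0) := by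
    have hg : Tendsto (fun n : ℕ => C * Real.sqrt (((n:ℝ) * bn n / Real.log n)⁻¹))
        atTop (nhds 0) := by
      have h0 : Tendsto (fun n : ℕ => ((n:ℝ) * bn n / Real.log n)⁻¹) atTop (nhds 0) :=
        hnb.inv_tendsto_atTop
      simpa using (h0.sqrt).const_mul C
    have hlb : ∀ᶠ n in atTop, 0 ≤ Δ n / (Real.sqrt n * bn n) := by
      filter_upwards with n
      exact div_nonneg (hΔnn n) (mul_nonneg (Real.sqrt_nonneg _) (hbn n).le)
    exact tendsto_of_tendsto_of_tendsto_of_le_of_le' tendsto_const_nhds hg hlb hub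
  have hεt : Tendsto ε atTop (nhds 0) := by
    have h1 : Tendsto (fun n : ℕ => 2 * L * bn n) atTop (nhds 0) := by
      simpa using hbn0.const_mul (2 * L)
    simpa using h1.add ht2
  rw [Metric.tendstoUniformly_iff]
  intro δ hδ
  filter_upwards [hεt.eventually_lt_const hδ, eventually_ge_atTop 1] with n hn hn1
  intro x
  rw [Real.dist_eq, abs_sub_comm]
  have hnp : (0:ℝ) < n := by exact_mod_cast hn1
  have hsnp : 0 < Real.sqrt n := Real.sqrt_pos.2 hnp
  exact lt_of_le_of_lt
    (bfp_bound L hL f F (Fn n) hfc hf hF (bn n) (hbn n) (Real.sqrt n) hsnp (Δ n) (hΔ n) x) hn
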